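/- Let Γ = (I, {a_ij}) be a generalized tree and let q be a nonzero complex number. If system (4) for Γ with λ = −q − q^{-1} has a solution, then either |q| = 1 or q is real. -/

import Mathlib

open SimpleGraph Finset

private lemma concat_isPath' {V : Type*} {G : SimpleGraph V} {u v w : V}
    {p : G.Walk u v} (hp : p.IsPath) (h : G.Adj v w) (hw : w ∉ p.support) :
    (p.concat h).IsPath := by
  rw [Walk.isPath_def, Walk.support_concat]
  simpa [List.concat_eq_append, List.nodup_append] using ⟨hp.support_nodup, fun a ha h => hw (h ▸ ha)⟩

private lemma darts_adj {V : Type*} [DecidableEq V] {G : SimpleGraph V} (ht : G.IsTree)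
    {r i j : V}
    (pi : G.Walk r i) (pj : G.Walk r j) (hpi : pi.IsPath) (hpj : pj.IsPath)
    (h : G.Adj i j) :
    pj.darts = pi.darts ++ [⟨(i, j), h⟩] ∨ pi.darts = pj.darts ++ [⟨(j, i), h.symm⟩] := by
  by_cases hj : j ∈ pi.support
  · right
    have hdrop : pi.dropUntil j hj = Walk.cons h.symm Walk.nil := by
      refine (ht.existsUnique_path j i).unique (hpi.dropUntil hj) ?_
      simp [Walk.isPath_def, h.ne']
    have htake : pi.takeUntil j hj = pj :=
      (ht.existsUnique_path r j).unique (hpi.takeUntil hj) hpj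
    have hspec := pi.take_spec hj
    calc pi.darts = ((pi.takeUntil j hj).append (pi.dropUntil j hj)).darts := by rw [hspec]
      _ = pj.darts ++ [⟨(j, i), h.symm⟩] := by
          rw [Walk.darts_append, htake, hdrop]; rfl
  · left
    have hcp : (pi.concat h).IsPath := concat_isPath' hpi h hj
    have heq : pj = pi.concat h := (ht.existsUnique_path r j).unique hpj hcp
    rw [heq, Walk.darts_concat, List.concat_eq_append]

/-- Let `Γ = (I, a)` be a generalized tree and let `q` be a nonzero complex
number. If system (4) for `Γ` with `λ = -q - q⁻¹` has a solution, then either `|q| = 1`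
or `q` is real. -/
theorem stmt_6 {I : Type*} [Fintype I] [Nonempty I] [DecidableEq I]
    (a : I → I → ℕ) (hsymm : ∀ i j, a i j = a j i) (hle : ∀ i j, a i j ≤ 1)
    (G : SimpleGraph I) (hG : ∀ i j, G.Adj i j ↔ i ≠ j ∧ a i j = 1)
    (htree : G.IsTree)
    (q : ℂ) (hq : q ≠ 0)
    (hsol : ∃ y : I → I → ℂ,
      (∀ i j, i ≠ j → a i j = 1 → y i j * y j i = 1) ∧
      (∀ j, ∑ i ∈ Finset.univ.filter (fun i => i ≠ j ∧ a i j = 1), y i j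
          = (-q - q⁻¹) - (a j j : ℂ))) :
    ‖q‖ = 1 ∨ q.im = 0 := by
  obtain ⟨y, hy1, hy2⟩ := hsol
  set lam : ℂ := -q - q⁻¹ with hlam
  -- Step 1 : build an "eigenvector" x with nonzero entries
  have hyinv : ∀ {i j : I}, G.Adj i j → y i j * y j i = 1 := by
    intro i j h
    exact hy1 i j ((hG i j).1 h).1 ((hG i j).1 h).2
  have hyne : ∀ {i j : I}, G.Adj i j → y i j ≠ 0 := fun h =>
    left_ne_zero_of_mul_eq_one (hyinv h)
  obtain ⟨r⟩ := ‹Nonempty I›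
  choose p hp _ using htree.existsUnique_path r
  set x : I → ℂ := fun v => ((p v).darts.map (fun d => y d.snd d.fst)).prod with hx
  have hxne : ∀ v, x v ≠ 0 := by
    intro v
    refine List.prod_ne_zero ?_
    intro h0
    obtain ⟨d, hd, hd0⟩ := List.mem_map.1 h0
    exact hyne d.adj.symm hd0
  have hedge : ∀ {i j : I}, G.Adj i j → x i = y i j * x j := by
    intro i j h
    rcases darts_adj htree (p i) (p j) (hp i) (hp j) h with hc | hc
    · -- x j = x i * y j i
      have : x j = x i * y j i := by
        simp only [hx]
        rw [hc, List.map_append, List.prod_append]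
        simp
      rw [this]
      linear_combination -(x i) * hyinv h.symm
    · simp only [hx]
      rw [hc, List.map_append, List.prod_append]
      simp [mul_comm]
  -- Step 2 : eigen equation
  have heig : ∀ j, ∑ i, (a j i : ℂ) * x i = lam * x j := by
    intro j
    have hsplit := Finset.sum_filter_add_sum_filter_not Finset.univ
      (fun i => i ≠ j ∧ a i j = 1) (fun i => (a j i : ℂ) * x i)
    have h1 : ∑ i ∈ Finset.univ.filter (fun i => i ≠ j ∧ a i j = 1), (a j i : ℂ) * x i
        = (lam - (a j j : ℂ)) * x j := by
      rw [← hy2 j, Finset.sum_mul]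
      refine Finset.sum_congr rfl ?_
      intro i hi
      rw [Finset.mem_filter] at hi
      have hadj : G.Adj i j := (hG i j).2 ⟨hi.2.1, hi.2.2⟩
      rw [hedge hadj, hsymm j i, hi.2.2]
      push_cast; ring
    have h2 : ∑ i ∈ Finset.univ.filter (fun i => ¬(i ≠ j ∧ a i j = 1)), (a j i : ℂ) * x i
        = (a j j : ℂ) * x j := by
      refine Finset.sum_eq_single_of_mem j ?_ ?_
      · simp
      · intro i hi hij
        rw [Finset.mem_filter] at hi
        have : a i j = 0 := by
          rcases Nat.le_one_iff_eq_zero_or_eq_one.1 (hle i j) with h0 | h1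
          · exact h0
          · exact absurd ⟨hij, h1⟩ hi.2
        rw [hsymm j i, this]
        simp
    rw [← hsplit, h1, h2]
    ring
  -- Step 3 : lam is real
  have hlamim : lam.im = 0 := by
    set T : ℂ := ∑ j, ∑ i, (a j i : ℂ) * ((starRingEnd ℂ) (x j) * x i) with hT
    have hTeq : T = lam * (∑ j, (Complex.normSq (x j) : ℂ)) := by
      rw [hT, Finset.mul_sum]
      refine Finset.sum_congr rfl ?_
      intro j _
      rw [Complex.normSq_eq_conj_mul_self]
      calc ∑ i, (a j i : ℂ) * ((starRingEnd ℂ) (x j) * x i)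
          = (starRingEnd ℂ) (x j) * ∑ i, (a j i : ℂ) * x i := by
            rw [Finset.mul_sum]; refine Finset.sum_congr rfl fun i _ => by ring
        _ = (starRingEnd ℂ) (x j) * (lam * x j) := by rw [heig j]
        _ = lam * ((starRingEnd ℂ) (x j) * x j) := by ring
    have hTconj : (starRingEnd ℂ) T = T := by
      rw [hT, map_sum]
      rw [Finset.sum_comm]
      refine Finset.sum_congr rfl fun j _ => ?_
      rw [map_sum]
      refine Finset.sum_congr rfl fun i _ => ?_
      simp only [map_mul, Complex.conj_conj, Complex.conj_natCast]
      rw [hsymm j i]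
      ring
    have hTim : T.im = 0 := by
      have := congrArg Complex.im hTconj
      simp only [Complex.conj_im] at this
      linarith
    have hN : (0 : ℝ) < ∑ j, Complex.normSq (x j) := by
      refine Finset.sum_pos (fun j _ => ?_) ⟨r, Finset.mem_univ r⟩
      exact Complex.normSq_pos.2 (hxne j)
    have : T.im = lam.im * (∑ j, Complex.normSq (x j)) := by
      rw [hTeq]
      rw [Complex.mul_im]
      simp [Complex.ofReal_im]
    rw [hTim] at this
    rcases mul_eq_zero.1 this.symm with h | h
    · exact h
    · exact absurd h (ne_of_gt hN)
  -- Step 4 : conclude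
  have him : -q.im - (q⁻¹).im = 0 := by
    have := hlamim
    rw [hlam] at this
    simpa [Complex.sub_im, Complex.neg_im] using this
  rw [Complex.inv_im] at him
  have hnsq : Complex.normSq q ≠ 0 := (Complex.normSq_pos.2 hq).ne'
  have key : q.im * (Complex.normSq q - 1) = 0 := by
    field_simp at him
    nlinarith [him]
  rcases mul_eq_zero.1 key with h | h
  · exact Or.inr h
  · left
    have : Complex.normSq q = 1 := by linarith
    have h2 : ‖q‖ ^ 2 = 1 := by rw [Complex.sq_norm, this]
    nlinarith [norm_nonneg q, h2]
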